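/- Fix r ≥ 2. The assignment A ↦ g_A^r is injective on subsets A of {n ∈ ℕ : n ≥ r + 1 and n·r is even}: if A, B are such subsets and g_A^r and g_B^r agree as functions on Σ n : ℕ, SimpleGraph (Fin n), then A = B. Moreover, for every such A, the rows of the restricted join matrix of g_A^r (rows and columns indexed by 2-colored graphs on Fin n vertex sets whose underlying graph is r-regular; entry at (X,Y) equal to g_A^r of the underlying graph of η̄_{1,2}(X,Y)) span an ℝ-subspace of the function space of dimension at most 2. Consequently there are continuum many real-valued graph parameters whose restricted join matrix has rank at most 2. -/

import Mathlib

/-- Same-side adjacency on the disjoint union of two graphs. -/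
def sumAdj {V₁ V₂ : Type*} (G₁ : SimpleGraph V₁) (G₂ : SimpleGraph V₂) :
    V₁ ⊕ V₂ → V₁ ⊕ V₂ → Prop
  | Sum.inl a, Sum.inl b => G₁.Adj a b
  | Sum.inr a, Sum.inr b => G₂.Adj a b
  | _, _ => False

lemma sumAdj_symm {V₁ V₂ : Type*} (G₁ : SimpleGraph V₁) (G₂ : SimpleGraph V₂)
    {u v : V₁ ⊕ V₂} (h : sumAdj G₁ G₂ u v) : sumAdj G₁ G₂ v u := by
  cases u <;> cases v <;> simp_all [sumAdj] <;> exact h.symm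

/-- The disjoint union of two simple graphs. -/
def sumGraph {V₁ V₂ : Type*} (G₁ : SimpleGraph V₁) (G₂ : SimpleGraph V₂) :
    SimpleGraph (V₁ ⊕ V₂) where
  Adj := sumAdj G₁ G₂
  symm := ⟨fun _ _ h => sumAdj_symm G₁ G₂ h⟩
  loopless := ⟨fun u => by cases u <;> simp [sumAdj]⟩

/-- The coloring of the disjoint union of two `k`-colored graphs. -/
def joinColor {k : ℕ} {V₁ V₂ : Type*} (C₁ : Fin k → Set V₁) (C₂ : Fin k → Set V₂)
    (ℓ : Fin k) : Set (V₁ ⊕ V₂) :=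
  Sum.inl '' C₁ ℓ ∪ Sum.inr '' C₂ ℓ

/-- The underlying graph of the `(i,j)`-join of two `k`-colored graphs. -/
def joinGraph {k : ℕ} (i j : Fin k) {V₁ V₂ : Type*}
    (G₁ : SimpleGraph V₁) (C₁ : Fin k → Set V₁)
    (G₂ : SimpleGraph V₂) (C₂ : Fin k → Set V₂) : SimpleGraph (V₁ ⊕ V₂) where
  Adj u v := u ≠ v ∧ (sumAdj G₁ G₂ u v ∨
    (u ∈ joinColor C₁ C₂ i ∧ v ∈ joinColor C₁ C₂ j) ∨
    (u ∈ joinColor C₁ C₂ j ∧ v ∈ joinColor C₁ C₂ i))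
  symm := ⟨fun u v ⟨hne, h⟩ => ⟨hne.symm, by
    rcases h with h | h | h
    · exact Or.inl (sumAdj_symm G₁ G₂ h)
    · exact Or.inr (Or.inr ⟨h.2, h.1⟩)
    · exact Or.inr (Or.inl ⟨h.2, h.1⟩)⟩⟩
  loopless := ⟨fun u h => h.1 rfl⟩


/-- A graph is `r`-regular if every vertex has exactly `r` neighbors. -/
def RegularDeg {V : Type*} (r : ℕ) (G : SimpleGraph V) : Prop :=
  ∀ v : V, (G.neighborSet v).ncard = r

open Classical in
/-- The graph parameter `g_A^r`: the number of vertices if the graph is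
`r`-regular, connected, with number of vertices in `A`, and `0` otherwise. -/
noncomputable def gAr (r : ℕ) (A : Set ℕ) {V : Type*} [Fintype V] (G : SimpleGraph V) : ℝ :=
  if RegularDeg r G ∧ G.Connected ∧ Fintype.card V ∈ A then (Fintype.card V : ℝ) else 0

/-- `2`-colored graphs on vertex sets `Fin n` whose underlying graph is
`r`-regular. -/
def Jdx (r : ℕ) :=
  {X : Σ n : ℕ, SimpleGraph (Fin n) × (Fin 2 → Set (Fin n)) // RegularDeg r X.2.1}

/-- Transport a graph on a finite vertex type to a graph on `Fin n`. -/
noncomputable def toFinGraph {V : Type} [Fintype V] (G : SimpleGraph V) :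
    Σ n : ℕ, SimpleGraph (Fin n) :=
  ⟨Fintype.card V, G.map (Fintype.equivFin V).toEmbedding⟩

-- ============ auxiliary ============

lemma regularDeg_iso {r : ℕ} {V W : Type*} {G : SimpleGraph V} {H : SimpleGraph W}
    (φ : G ≃g H) (h : RegularDeg r G) : RegularDeg r H := by
  intro w
  have hv := h (φ.symm w)
  have eq1 := φ.mapNeighborSet (φ.symm w)
  rw [RelIso.apply_symm_apply] at eq1
  rw [← hv, ← Nat.card_coe_set_eq, ← Nat.card_coe_set_eq]
  exact Nat.card_congr eq1.symm

lemma gAr_iso {r : ℕ} {A : Set ℕ} {V W : Type*} [Fintype V] [Fintype W]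
    {G : SimpleGraph V} {H : SimpleGraph W} (φ : G ≃g H) : gAr r A H = gAr r A G := by
  classical
  have hc : Fintype.card W = Fintype.card V := φ.symm.card_eq
  have hiff : (RegularDeg r H ∧ H.Connected ∧ Fintype.card V ∈ A) ↔
      (RegularDeg r G ∧ G.Connected ∧ Fintype.card V ∈ A) := by
    constructor
    · rintro ⟨h1, h2, h3⟩
      exact ⟨regularDeg_iso φ.symm h1, φ.connected_iff.mpr h2, h3⟩
    · rintro ⟨h1, h2, h3⟩
      exact ⟨regularDeg_iso φ h1, φ.connected_iff.mp h2, h3⟩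
  rw [gAr, gAr, hc, if_congr hiff rfl rfl]

instance : Subsingleton (SimpleGraph (Fin 0)) :=
  ⟨fun a b => by ext v; exact v.elim0⟩

instance : Subsingleton (Set (Fin 0)) :=
  ⟨fun a b => by ext v; exact v.elim0⟩

/-- The trivial element of `Jdx r` on zero vertices. -/
def Jzero (r : ℕ) : Jdx r := ⟨⟨0, ⊥, fun _ => ∅⟩, fun v => v.elim0⟩

lemma Jdx_eq_Jzero {r : ℕ} (X : Jdx r) (h : X.1.1 = 0) : X = Jzero r := by
  obtain ⟨⟨n, P⟩, hX⟩ := X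
  subst h
  apply Subtype.ext
  exact Sigma.ext rfl (heq_of_eq (Subsingleton.elim _ _))

lemma exists_cross {V₁ V₂ : Type*} {J : SimpleGraph (V₁ ⊕ V₂)} :
    ∀ {a b : V₁ ⊕ V₂}, J.Walk a b → ∀ (x : V₁) (y : V₂), a = Sum.inl x → b = Sum.inr y →
      ∃ u v, J.Adj (Sum.inl u) (Sum.inr v) := by
  intro a b w
  induction w with
  | nil =>
    intro x y hx hy
    rw [hx] at hy
    exact absurd hy (by simp)
  | @cons x c y h p ih =>
    intro x' y' hx hy
    subst hx hy
    cases c with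
    | inl c' => exact ih c' y' rfl rfl
    | inr c' => exact ⟨x', c', h⟩

lemma not_reg_conn_of_ne {r : ℕ} {n₁ n₂ : ℕ} {G₁ : SimpleGraph (Fin n₁)}
    {G₂ : SimpleGraph (Fin n₂)} {C₁ : Fin 2 → Set (Fin n₁)} {C₂ : Fin 2 → Set (Fin n₂)}
    (hG₁ : RegularDeg r G₁) (h₁ : n₁ ≠ 0) (h₂ : n₂ ≠ 0) :
    ¬ (RegularDeg r (joinGraph (0 : Fin 2) 1 G₁ C₁ G₂ C₂) ∧
       (joinGraph (0 : Fin 2) 1 G₁ C₁ G₂ C₂).Connected) := by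
  rintro ⟨hreg, hconn⟩
  set J := joinGraph (0 : Fin 2) 1 G₁ C₁ G₂ C₂ with hJ
  have u0 : Fin n₁ := ⟨0, Nat.pos_of_ne_zero h₁⟩
  have v0 : Fin n₂ := ⟨0, Nat.pos_of_ne_zero h₂⟩
  obtain ⟨w⟩ := hconn.preconnected (Sum.inl u0) (Sum.inr v0)
  obtain ⟨u, v, hadj⟩ := exists_cross w u0 v0 rfl rfl
  have hsub : insert (Sum.inr v) (Sum.inl '' G₁.neighborSet u) ⊆ J.neighborSet (Sum.inl u) := by
    rintro w (rfl | ⟨a, ha, rfl⟩)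
    · exact hadj
    · exact (show (joinGraph (0 : Fin 2) 1 G₁ C₁ G₂ C₂).Adj _ _ from
        ⟨by simp [(SimpleGraph.Adj.ne ha)], Or.inl ha⟩)
  have hcard : r + 1 ≤ (J.neighborSet (Sum.inl u)).ncard := by
    have h2 : (insert (Sum.inr v) (Sum.inl '' G₁.neighborSet u)).ncard = r + 1 := by
      rw [Set.ncard_insert_of_notMem (by simp) (Set.toFinite _),
        Set.ncard_image_of_injective _ Sum.inl_injective, hG₁ u]
    rw [← h2]
    exact Set.ncard_le_ncard hsub (Set.toFinite _)
  rw [hreg (Sum.inl u)] at hcard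
  omega

lemma row_eq_zero {r : ℕ} (A : Set ℕ) (X Y : Jdx r) (hX : X.1.1 ≠ 0) (hY : Y.1.1 ≠ 0) :
    gAr r A (joinGraph (0 : Fin 2) (1 : Fin 2) X.1.2.1 X.1.2.2 Y.1.2.1 Y.1.2.2) = 0 := by
  rw [gAr, if_neg]
  rintro ⟨h1, h2, -⟩
  exact not_reg_conn_of_ne X.2 hX hY ⟨h1, h2⟩

lemma rank_le_two (r : ℕ) (A : Set ℕ) :
    Module.rank ℝ
      ↥(Submodule.span ℝ (Set.range (fun X : Jdx r =>
        fun Y : Jdx r =>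
          gAr r A (joinGraph (0 : Fin 2) (1 : Fin 2)
            X.1.2.1 X.1.2.2 Y.1.2.1 Y.1.2.2)))) ≤ 2 := by
  classical
  set row : Jdx r → Jdx r → ℝ := fun X Y =>
    gAr r A (joinGraph (0 : Fin 2) (1 : Fin 2) X.1.2.1 X.1.2.2 Y.1.2.1 Y.1.2.2) with hrow
  set g1 : Jdx r → ℝ := fun Y => if Y = Jzero r then 1 else 0 with hg1
  have hsub : Set.range row ⊆ ↑(Submodule.span ℝ {row (Jzero r), g1}) := by
    rintro _ ⟨X, rfl⟩
    by_cases hX : X.1.1 = 0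
    · rw [Jdx_eq_Jzero X hX]
      exact Submodule.subset_span (Set.mem_insert _ _)
    · have heq : row X = (row X (Jzero r)) • g1 := by
        funext Y
        by_cases hY : Y = Jzero r
        · subst hY
          simp [hg1]
        · have hY' : Y.1.1 ≠ 0 := fun h => hY (Jdx_eq_Jzero Y h)
          simp only [Pi.smul_apply, hg1, if_neg hY, smul_eq_mul, mul_zero]
        
          exact row_eq_zero A X Y hX hY'
      rw [heq]
      exact Submodule.smul_mem _ _
        (Submodule.subset_span (Set.mem_insert_of_mem _ rfl))
  have h1 := Submodule.rank_mono (Submodule.span_le.mpr hsub)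
  refine h1.trans ((rank_span_le _).trans ?_)
  refine (Cardinal.mk_insert_le).trans ?_
  rw [Cardinal.mk_singleton]
  norm_num

lemma exists_reg_conn (r n : ℕ) (hr : 2 ≤ r) (hn : r + 1 ≤ n) (he : Even (n * r)) :
    ∃ G : SimpleGraph (Fin n), RegularDeg r G ∧ G.Connected := by
  haveI : NeZero n := ⟨by omega⟩
  have hpar : n % 2 = 0 ∨ r % 2 = 0 := by
    rcases Nat.even_mul.mp he with h | h
    · exact Or.inl (Nat.even_iff.mp h)
    · exact Or.inr (Nat.even_iff.mp h)
  set k := r / 2 with hk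
  have hk2 : 2 * k ≤ r ∧ r ≤ 2 * k + 1 := by omega
  set T : Finset ℕ :=
    (Finset.Icc 1 k ∪ Finset.Icc (n - k) (n - 1)) ∪ (if r % 2 = 1 then {n / 2} else ∅) with hT
  have hmemT : ∀ m, m ∈ T ↔ ((1 ≤ m ∧ m ≤ k) ∨ (n - k ≤ m ∧ m ≤ n - 1) ∨
      (r % 2 = 1 ∧ 2 * m = n)) := by
    intro m
    by_cases hodd : r % 2 = 1 <;>
      simp [hT, hodd, Finset.mem_Icc, Finset.mem_union] <;> omega
  have hbd : ∀ m ∈ T, 1 ≤ m ∧ m ≤ n - 1 := by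
    intro m hm
    rcases (hmemT m).mp hm with h | h | h <;> omega
  have hcardT : T.card = r := by
    have hd1 : Disjoint (Finset.Icc 1 k) (Finset.Icc (n - k) (n - 1)) := by
      rw [Finset.disjoint_left]
      intro m hm hm'
      simp [Finset.mem_Icc] at hm hm'
      omega
    have hd2 : Disjoint (Finset.Icc 1 k ∪ Finset.Icc (n - k) (n - 1))
        ((if r % 2 = 1 then {n / 2} else ∅ : Finset ℕ)) := by
      by_cases hodd : r % 2 = 1 <;> simp [hodd, Finset.disjoint_left, Finset.mem_Icc] <;> omega
    rw [hT, Finset.card_union_of_disjoint hd2, Finset.card_union_of_disjoint hd1,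
      Nat.card_Icc, Nat.card_Icc]
    by_cases hodd : r % 2 = 1 <;> simp [hodd] <;> omega
  set S : Finset (ZMod n) := T.image (fun m : ℕ => (m : ZMod n)) with hS
  have hval : ∀ m ∈ T, ((m : ZMod n)).val = m := by
    intro m hm
    exact ZMod.val_cast_of_lt (by have := hbd m hm; omega)
  have hScard : S.card = r := by
    rw [hS, Finset.card_image_of_injOn, hcardT]
    intro a ha b hb hab
    have := congrArg ZMod.val hab
    rwa [hval a ha, hval b hb] at this
  have hS0 : (0 : ZMod n) ∉ S := by
    rw [hS]
    simp only [Finset.mem_image, not_exists]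
    rintro m ⟨hm, hm0⟩
    have := congrArg ZMod.val hm0
    rw [hval m hm, ZMod.val_zero] at this
    have := hbd m hm
    omega
  have hSneg : ∀ d ∈ S, -d ∈ S := by
    intro d hd
    rw [hS, Finset.mem_image] at hd ⊢
    obtain ⟨m, hm, rfl⟩ := hd
    have hb := hbd m hm
    refine ⟨n - m, ?_, ?_⟩
    · rw [hmemT]
      rcases (hmemT m).mp hm with h | h | h
      · right; left; omega
      · left; omega
      · right; right; omega
    · rw [Nat.cast_sub (by omega)]
      simp [ZMod.natCast_self]
  set G : SimpleGraph (ZMod n) :=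
    { Adj := fun u v => u - v ∈ S
      symm := ⟨fun u v h => by have := hSneg _ h; simpa [neg_sub] using this⟩
      loopless := ⟨fun v h => by simp only [sub_self] at h; exact hS0 h⟩ } with hG
  have hreg : RegularDeg r G := by
    intro v
    have hNS : G.neighborSet v = (fun d => v - d) '' (S : Set (ZMod n)) := by
      ext w
      simp only [SimpleGraph.mem_neighborSet, Set.mem_image, Finset.mem_coe]
      constructor
      · intro h
        exact ⟨v - w, h, by ring⟩
      · rintro ⟨d, hd, rfl⟩
        show v - (v - d) ∈ S
        simpa using hd
    rw [hNS, Set.ncard_image_of_injective _ sub_right_injective,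
      Set.ncard_coe_finset, hScard]
  have h1S : (1 : ZMod n) ∈ S := by
    rw [hS, Finset.mem_image]
    exact ⟨1, (hmemT 1).mpr (Or.inl ⟨le_refl 1, by omega⟩), Nat.cast_one⟩
  have hstep : ∀ m : ℕ, G.Adj (((m + 1 : ℕ) : ZMod n)) ((m : ZMod n)) := by
    intro m
    show ((m + 1 : ℕ) : ZMod n) - (m : ZMod n) ∈ S
    push_cast
    simpa using h1S
  have hreach : ∀ m : ℕ, G.Reachable 0 ((m : ZMod n)) := by
    intro m
    induction m with
    | zero => simpa using SimpleGraph.Reachable.refl (0 : ZMod n)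
    | succ m ih => exact ih.trans (hstep m).symm.reachable
  have hconn : G.Connected := by
    rw [SimpleGraph.connected_iff_exists_forall_reachable]
    refine ⟨0, fun w => ?_⟩
    have := hreach w.val
    rwa [ZMod.natCast_rightInverse w] at this
  -- transport to Fin n
  have e : ZMod n ≃ Fin n := Fintype.equivFinOfCardEq (ZMod.card n)
  refine ⟨G.map e.toEmbedding, ?_, ?_⟩
  · intro w
    have φ := SimpleGraph.Iso.map e G
    have hv := hreg (φ.symm w)
    have eq1 := (φ.mapNeighborSet (φ.symm w)).symm
    rw [RelIso.apply_symm_apply] at eq1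
    rw [← hv, ← Nat.card_coe_set_eq, ← Nat.card_coe_set_eq]
    exact Nat.card_congr eq1
  · exact ((SimpleGraph.Iso.map e G).connected_iff).mp hconn

lemma mem_of_agree (r : ℕ) (hr : 2 ≤ r) {A B : Set ℕ}
    (hA : A ⊆ {n : ℕ | r + 1 ≤ n ∧ Even (n * r)})
    (hfun : ∀ p : Σ n : ℕ, SimpleGraph (Fin n), gAr r A p.2 = gAr r B p.2)
    {n : ℕ} (hn : n ∈ A) : n ∈ B := by
  classical
  obtain ⟨hn1, hn2⟩ := hA hn
  obtain ⟨G, hGreg, hGconn⟩ := exists_reg_conn r n hr hn1 hn2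
  have h := hfun ⟨n, G⟩
  rw [gAr, if_pos ⟨hGreg, hGconn, by simpa using hn⟩] at h
  by_contra hB'
  rw [gAr, if_neg (by rintro ⟨-, -, h3⟩; rw [Fintype.card_fin] at h3; exact hB' h3)] at h
  rw [Fintype.card_fin] at h
  have hn0 : (0 : ℝ) < (n : ℝ) := by
    have : 0 < n := by omega
    exact_mod_cast this
  exact absurd h (by linarith)


/-- For `r ≥ 2`, the map `A ↦ g_A^r` is injective on subsets of
`{n | n ≥ r + 1 ∧ n·r even}`; the rows of the restricted join matrix of
`g_A^r` span a subspace of dimension at most `2`; consequently there are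
continuum many real-valued graph parameters whose restricted join matrix has
rank at most `2`. -/
theorem gAr_injective_rank_le_two_continuum (r : ℕ) (hr : 2 ≤ r) :
    (∀ A B : Set ℕ, A ⊆ {n : ℕ | r + 1 ≤ n ∧ Even (n * r)} →
      B ⊆ {n : ℕ | r + 1 ≤ n ∧ Even (n * r)} →
      (∀ p : Σ n : ℕ, SimpleGraph (Fin n), gAr r A p.2 = gAr r B p.2) → A = B) ∧
    (∀ A : Set ℕ, A ⊆ {n : ℕ | r + 1 ≤ n ∧ Even (n * r)} →
      Module.rank ℝ
        ↥(Submodule.span ℝ (Set.range (fun X : Jdx r =>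
          fun Y : Jdx r =>
            gAr r A (joinGraph (0 : Fin 2) (1 : Fin 2)
              X.1.2.1 X.1.2.2 Y.1.2.1 Y.1.2.2)))) ≤ 2) ∧
    (∃ P : Set ((Σ n : ℕ, SimpleGraph (Fin n)) → ℝ),
      Cardinal.mk P = Cardinal.continuum ∧
      ∀ f ∈ P,
        Module.rank ℝ
          ↥(Submodule.span ℝ (Set.range (fun X : Jdx r =>
            fun Y : Jdx r =>
              f (toFinGraph (joinGraph (0 : Fin 2) (1 : Fin 2)
                X.1.2.1 X.1.2.2 Y.1.2.1 Y.1.2.2))))) ≤ 2) := by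
  have part1 : ∀ A B : Set ℕ, A ⊆ {n : ℕ | r + 1 ≤ n ∧ Even (n * r)} →
      B ⊆ {n : ℕ | r + 1 ≤ n ∧ Even (n * r)} →
      (∀ p : Σ n : ℕ, SimpleGraph (Fin n), gAr r A p.2 = gAr r B p.2) → A = B := by
    intro A B hA hB hfun
    ext n
    exact ⟨fun h => mem_of_agree r hr hA hfun h,
      fun h => mem_of_agree r hr hB (fun p => (hfun p).symm) h⟩
  refine ⟨part1, fun A _ => rank_le_two r A, ?_⟩
  -- continuum part
  set S : Set ℕ := {n : ℕ | r + 1 ≤ n ∧ Even (n * r)} with hSdef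
  set F : Set ℕ → ((Σ n : ℕ, SimpleGraph (Fin n)) → ℝ) :=
    fun A => fun p => gAr r A p.2 with hF
  refine ⟨F '' {A | A ⊆ S}, ?_, ?_⟩
  · have hinj : Set.InjOn F {A | A ⊆ S} := by
      intro A hA B hB hFE
      exact part1 A B hA hB (fun p => congrFun hFE p)
    rw [Cardinal.mk_image_eq_of_injOn F _ hinj]
    have hSinf : S.Infinite := by
      refine Set.infinite_of_injective_forall_mem
        (f := fun m : ℕ => 2 * (r + 1 + m)) (fun a b hab => by simp only [] at hab; omega) ?_
      intro m
      exact ⟨by show r + 1 ≤ 2 * (r + 1 + m); omega, ⟨(r + 1 + m) * r, by ring⟩⟩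
    haveI : Infinite ↥S := hSinf.to_subtype
    have : Cardinal.mk ↥{A | A ⊆ S} = 2 ^ Cardinal.mk ↥S := Cardinal.mk_powerset S
    rw [this, Cardinal.mk_eq_aleph0 ↥S, Cardinal.two_power_aleph0]
  · rintro f ⟨A, hAS, rfl⟩
    have key : (fun X : Jdx r => fun Y : Jdx r =>
        F A (toFinGraph (joinGraph (0 : Fin 2) (1 : Fin 2)
          X.1.2.1 X.1.2.2 Y.1.2.1 Y.1.2.2))) =
        (fun X : Jdx r => fun Y : Jdx r =>
          gAr r A (joinGraph (0 : Fin 2) (1 : Fin 2)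
            X.1.2.1 X.1.2.2 Y.1.2.1 Y.1.2.2)) := by
      funext X Y
      exact gAr_iso (SimpleGraph.Iso.map (Fintype.equivFin _) _)
    rw [key]
    exact rank_le_two r A
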